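/- Let G be a graph with maximum degree Δ and let f be an L(2,1)-labeling of G using only labels in {0, 1, …, Δ+1}. Then every vertex v of degree Δ satisfies f(v) = 0 or f(v) = Δ+1. -/

import Mathlib

def IsL21Labeling {V : Type*} (G : SimpleGraph V) (f : V → ℕ) : Prop :=
  (∀ x y, G.Adj x y → 2 ≤ |(f x : ℤ) - (f y : ℤ)|) ∧
  (∀ x y, G.dist x y = 2 → 1 ≤ |(f x : ℤ) - (f y : ℤ)|)

theorem stmt1 {V : Type*} [Fintype V] (G : SimpleGraph V) [DecidableRel G.Adj]
    (f : V → ℕ) (hf : IsL21Labeling G f)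
    (hb : ∀ v, f v ≤ G.maxDegree + 1)
    (v : V) (hv : G.degree v = G.maxDegree) :
    f v = 0 ∨ f v = G.maxDegree + 1 := by
  by_contra hcon
  push_neg at hcon
  obtain ⟨h0, h1⟩ := hcon
  set Δ := G.maxDegree with hΔ
  set k := f v with hk
  have hk1 : 1 ≤ k := Nat.one_le_iff_ne_zero.mpr h0
  have hkΔ : k ≤ Δ := by have := hb v; omega
  -- neighbors have labels ≥ 2 away from k
  have hnb : ∀ u ∈ G.neighborFinset v, f u + 2 ≤ k ∨ k + 2 ≤ f u := by
    intro u hu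
    rw [SimpleGraph.mem_neighborFinset] at hu
    have := hf.1 v u hu
    rcases abs_cases ((f v : ℤ) - f u) with ⟨he, _⟩ | ⟨he, _⟩ <;> omega
  -- distinct neighbors get distinct labels
  have hinj : ∀ u ∈ G.neighborFinset v, ∀ w ∈ G.neighborFinset v, f u = f w → u = w := by
    intro u hu w hw hfw
    by_contra hne
    rw [SimpleGraph.mem_neighborFinset] at hu hw
    rcases em (G.Adj u w) with hadj | hnadj
    · have := hf.1 u w hadj
      rw [hfw] at this
      simp at this
    · have hd2 : G.dist u w = 2 := by
        have hle : G.dist u w ≤ 2 := by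
          have := SimpleGraph.dist_le (SimpleGraph.Walk.cons hu.symm
            (SimpleGraph.Walk.cons hw SimpleGraph.Walk.nil))
          simpa using this
        have hne1 : G.dist u w ≠ 1 := fun h =>
          hnadj (SimpleGraph.dist_eq_one_iff_adj.mp h)
        have hne0 : G.dist u w ≠ 0 := by
          intro h
          rcases SimpleGraph.dist_eq_zero_iff_eq_or_not_reachable.mp h with h' | h'
          · exact hne h'
          · exact h' ⟨SimpleGraph.Walk.cons hu.symm (SimpleGraph.Walk.cons hw
              SimpleGraph.Walk.nil)⟩
        omega
      have := hf.2 u w hd2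
      rw [hfw] at this
      simp at this
  -- count
  have hcard : (G.neighborFinset v).card ≤ ((Finset.range (Δ + 2)) \ {k - 1, k, k + 1}).card := by
    apply Finset.card_le_card_of_injOn f
    · intro u hu
      have h1 := hnb u hu
      have h2 : f u ≤ Δ + 1 := hb u
      simp only [Finset.mem_coe, Finset.mem_sdiff, Finset.mem_range, Finset.mem_insert, Finset.mem_singleton]
      omega
    · intro u hu w hw h
      exact hinj u hu w hw h
  rw [SimpleGraph.card_neighborFinset_eq_degree, hv] at hcard
  have hsub : ({k - 1, k, k + 1} : Finset ℕ) ⊆ Finset.range (Δ + 2) := by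
    intro x hx
    simp only [Finset.mem_insert, Finset.mem_singleton] at hx
    rw [Finset.mem_range]
    rcases hx with h | h | h <;> omega
  rw [Finset.card_sdiff_of_subset hsub, Finset.card_range] at hcard
  have h3 : ({k - 1, k, k + 1} : Finset ℕ).card = 3 := by
    rw [Finset.card_insert_of_notMem (by simp; omega),
      Finset.card_insert_of_notMem (by simp), Finset.card_singleton]
  omega
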